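/- Let π: Γ̃ → Γ be an edge-free harmonic double cover of metric graphs, and for a subgraph Γ₀ of Γ set g̃(Γ₀) = #E(Γ₀) − #{undilated vertices of Γ₀}. Then: (i) for every connected subgraph Γ₀, g̃(Γ₀) = g(Γ₀) − 1 + #(dilated vertices of Γ₀) ≥ −1; and (ii) for every set F ⊂ E(Γ) of h = g(Γ̃) − g(Γ) undilated edges with connected component decomposition Γ∖F = Γ₁ ∪ ⋯ ∪ Γ_k, one has Σᵢ g̃(Γᵢ) = 0, so either g̃(Γᵢ) = −1 for some i or g̃(Γᵢ) = 0 for all i. -/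

import Mathlib

open scoped Classical
noncomputable section

/-- A (model of a) metric graph: a finite (multi)graph with oriented edges
and positive edge lengths. -/
structure MetricGraph where
  V : Type
  E : Type
  [fintV : Fintype V]
  [fintE : Fintype E]
  s : E → V
  t : E → V
  len : E → ℝ
  len_pos : ∀ e, 0 < len e

attribute [instance] MetricGraph.fintV MetricGraph.fintE

namespace MetricGraph

/-- Two vertices are adjacent if some edge joins them. -/
def Adj (G : MetricGraph) (u v : G.V) : Prop :=
  ∃ e : G.E, (G.s e = u ∧ G.t e = v) ∨ (G.s e = v ∧ G.t e = u)

/-- Reachability by walks. -/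
def Reach (G : MetricGraph) : G.V → G.V → Prop :=
  Relation.ReflTransGen G.Adj

/-- A graph is connected if it is nonempty and any two vertices are joined by a walk. -/
def Connected (G : MetricGraph) : Prop :=
  Nonempty G.V ∧ ∀ u v : G.V, G.Reach u v

/-- The genus (first Betti number) of a connected graph: #E - #V + 1. -/
def genus (G : MetricGraph) : ℤ :=
  (Fintype.card G.E : ℤ) - (Fintype.card G.V : ℤ) + 1

/-- The number of connected components. -/
def numComponents (G : MetricGraph) : ℕ :=
  Nat.card (Quot G.Reach)

/-- A tree is a connected graph with #V = #E + 1. -/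
def IsTree (G : MetricGraph) : Prop :=
  G.Connected ∧ Fintype.card G.E + 1 = Fintype.card G.V

/-- A loop is an edge whose endpoints coincide. -/
def IsLoop (G : MetricGraph) (e : G.E) : Prop := G.s e = G.t e

/-- Delete a set of edges. -/
def deleteEdges (G : MetricGraph) (F : Set G.E) : MetricGraph where
  V := G.V
  E := {e : G.E // e ∉ F}
  fintV := G.fintV
  fintE := Fintype.ofFinite _
  s e := G.s e.1
  t e := G.t e.1
  len e := G.len e.1
  len_pos e := G.len_pos e.1

/-- A bridge is an edge whose deletion disconnects the graph. -/
def IsBridge (G : MetricGraph) (e : G.E) : Prop :=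
  ¬ (G.deleteEdges {e}).Connected

/-- Contract a set of edges: identify the endpoints of each edge of `F` and
remove the edges of `F`. -/
def contractEdges (G : MetricGraph) (F : Set G.E) : MetricGraph where
  V := Quot (fun u v : G.V => ∃ e ∈ F, G.s e = u ∧ G.t e = v)
  E := {e : G.E // e ∉ F}
  fintV := Fintype.ofFinite _
  fintE := Fintype.ofFinite _
  s e := Quot.mk _ (G.s e.1)
  t e := Quot.mk _ (G.t e.1)
  len e := G.len e.1
  len_pos e := G.len_pos e.1

/-- The subgraph induced on a set of vertices (with all edges joining them). -/
def inducedOn (G : MetricGraph) (S : Set G.V) : MetricGraph where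
  V := {v : G.V // v ∈ S}
  E := {e : G.E // G.s e ∈ S ∧ G.t e ∈ S}
  fintV := Fintype.ofFinite _
  fintE := Fintype.ofFinite _
  s e := ⟨G.s e.1, e.2.1⟩
  t e := ⟨G.t e.1, e.2.2⟩
  len e := G.len e.1
  len_pos e := G.len_pos e.1

/-- The connected component of a vertex, as a set of vertices. -/
def componentOf (G : MetricGraph) (v : G.V) : Set G.V := {u : G.V | G.Reach v u}

/-- The Jacobian polynomial of a metric graph: the sum, over all `g`-element
sets `C` of edges whose complement is a spanning tree, of the product of the
lengths of the edges of `C`. -/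
def jacPoly (G : MetricGraph) : ℝ :=
  ∑ C : Finset G.E,
    if (C.card : ℤ) = G.genus ∧ (G.deleteEdges (↑C)).IsTree then ∏ e ∈ C, G.len e else 0

end MetricGraph

/-- A harmonic double cover of metric graphs, encoded by the projection
together with its deck involution.  A vertex or edge downstairs is *dilated*
if its fiber is a single (involution-fixed) point; dilated edges have
half the length of their image. -/
structure DoubleCover (Gt G : MetricGraph) where
  πV : Gt.V → G.V
  πE : Gt.E → G.E
  ιV : Gt.V → Gt.V
  ιE : Gt.E → Gt.E
  ιV_invol : ∀ w, ιV (ιV w) = w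
  ιE_invol : ∀ f, ιE (ιE f) = f
  πV_ι : ∀ w, πV (ιV w) = πV w
  πE_ι : ∀ f, πE (ιE f) = πE f
  s_comm : ∀ f, G.s (πE f) = πV (Gt.s f)
  t_comm : ∀ f, G.t (πE f) = πV (Gt.t f)
  s_ι : ∀ f, Gt.s (ιE f) = ιV (Gt.s f)
  t_ι : ∀ f, Gt.t (ιE f) = ιV (Gt.t f)
  πV_surj : Function.Surjective πV
  πE_surj : Function.Surjective πE
  fiberV : ∀ w w', πV w' = πV w → w' = w ∨ w' = ιV w
  fiberE : ∀ f f', πE f' = πE f → f' = f ∨ f' = ιE f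
  len_eq : ∀ f, Gt.len f = if ιE f = f then G.len (πE f) / 2 else G.len (πE f)

namespace DoubleCover

variable {Gt G : MetricGraph} (dc : DoubleCover Gt G)

/-- A vertex of the base is dilated if it has a unique (involution-fixed) preimage. -/
def dilatedV (v : G.V) : Prop := ∃ w, dc.πV w = v ∧ dc.ιV w = w

/-- An edge of the base is dilated if it has a unique (involution-fixed) preimage. -/
def dilatedE (e : G.E) : Prop := ∃ f, dc.πE f = e ∧ dc.ιE f = f

/-- A double cover is free if it has no dilated vertices (hence no dilated edges). -/
def IsFree : Prop := ∀ v : G.V, ¬ dc.dilatedV v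

/-- A double cover is dilated if it has a dilated vertex. -/
def IsDilated : Prop := ∃ v : G.V, dc.dilatedV v

/-- A double cover is edge-free if its dilation subgraph consists of isolated
vertices only, i.e. there are no dilated edges. -/
def IsEdgeFree : Prop := ∀ e : G.E, ¬ dc.dilatedE e

/-- The dilation subgraph: the subgraph of the base consisting of all dilated
vertices and dilated edges. -/
def dilSubgraph : MetricGraph where
  V := {v : G.V // dc.dilatedV v}
  E := {e : G.E // dc.dilatedE e}
  fintV := Fintype.ofFinite _
  fintE := Fintype.ofFinite _
  s e := ⟨G.s e.1, by
    obtain ⟨f, hf, hfix⟩ := e.2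
    exact ⟨Gt.s f, by rw [← hf, dc.s_comm], by rw [← dc.s_ι, hfix]⟩⟩
  t e := ⟨G.t e.1, by
    obtain ⟨f, hf, hfix⟩ := e.2
    exact ⟨Gt.t f, by rw [← hf, dc.t_comm], by rw [← dc.t_ι, hfix]⟩⟩
  len e := G.len e.1
  len_pos e := G.len_pos e.1

/-- The number of dilated edges. -/
def md : ℕ := Nat.card {e : G.E // dc.dilatedE e}

/-- The number of dilated vertices. -/
def nd : ℕ := Nat.card {v : G.V // dc.dilatedV v}

/-- The number of connected components of the dilation subgraph. -/
def numDilComponents : ℕ := dc.dilSubgraph.numComponents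

/-- The connected component of `v` in `Γ ∖ F` has connected preimage in `Γ̃ ∖ π⁻¹(F)`. -/
def hasConnPreimage (F : Set G.E) (v : G.V) : Prop :=
  ((Gt.deleteEdges (dc.πE ⁻¹' F)).inducedOn
    {w : Gt.V | dc.πV w ∈ (G.deleteEdges F).componentOf v}).Connected

/-- An ogod (odd genus one decomposition): a set of `h = g(Γ̃) - g(Γ)` undilated
edges of the base such that every connected component of the complement has
connected preimage. -/
def IsOgod (F : Finset G.E) : Prop :=
  (F.card : ℤ) = Gt.genus - G.genus ∧
  (∀ e ∈ F, ¬ dc.dilatedE e) ∧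
  ∀ v : G.V, dc.hasConnPreimage (↑F) v

/-- The rank of an ogod: the number of connected components of `Γ ∖ F`. -/
def rank (_π : DoubleCover Gt G) (F : Finset G.E) : ℕ := (G.deleteEdges (↑F)).numComponents

/-- The Prym polynomial of a double cover. -/
def prymPoly : ℝ :=
  ∑ F : Finset G.E,
    if dc.IsOgod F then (4 : ℝ) ^ (dc.rank F - 1) * ∏ e ∈ F, G.len e else 0

end DoubleCover

namespace MetricGraph

/-- A subgraph of `G` given by a vertex set `S` and an edge set `T` whose
endpoints lie in `S`. -/
def subgraphOn (G : MetricGraph) (S : Set G.V) (T : Set G.E)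
    (hs : ∀ e ∈ T, G.s e ∈ S) (ht : ∀ e ∈ T, G.t e ∈ S) : MetricGraph where
  V := {v : G.V // v ∈ S}
  E := {e : G.E // e ∈ T}
  fintV := Fintype.ofFinite _
  fintE := Fintype.ofFinite _
  s e := ⟨G.s e.1, hs e.1 e.2⟩
  t e := ⟨G.t e.1, ht e.1 e.2⟩
  len e := G.len e.1
  len_pos e := G.len_pos e.1

/-- The vertex set of the connected component of `v` in `Γ ∖ F`. -/
def compV (G : MetricGraph) (F : Set G.E) (v : G.V) : Set G.V :=
  (G.deleteEdges F).componentOf v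

/-- The edge set of the connected component of `v` in `Γ ∖ F`. -/
def compE (G : MetricGraph) (F : Set G.E) (v : G.V) : Set G.E :=
  {e : G.E | e ∉ F ∧ G.s e ∈ G.compV F v ∧ G.t e ∈ G.compV F v}

end MetricGraph

namespace DoubleCover

variable {Gt G : MetricGraph} (dc : DoubleCover Gt G)

/-- For a subgraph `(S, T)` of the base of a double cover,
`g̃(Γ₀) = #E(Γ₀) - #{undilated vertices of Γ₀}`. -/
def gtilde (S : Set G.V) (T : Set G.E) : ℤ :=
  (Nat.card T : ℤ) - (Nat.card ({v : G.V | v ∈ S ∧ ¬ dc.dilatedV v}) : ℤ)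

end DoubleCover

namespace MetricGraph

variable {G : MetricGraph}

lemma Adj.symm {u v : G.V} (h : G.Adj u v) : G.Adj v u := by
  obtain ⟨e, h | h⟩ := h
  · exact ⟨e, Or.inr h⟩
  · exact ⟨e, Or.inl h⟩

lemma reach_equiv (G : MetricGraph) : Equivalence G.Reach where
  refl _ := Relation.ReflTransGen.refl
  symm h := (@Relation.ReflTransGen.stdSymm _ G.Adj ⟨fun _ _ h => Adj.symm h⟩).symm _ _ h
  trans h h' := Relation.ReflTransGen.trans h h'

lemma quot_mk_eq_iff (G : MetricGraph) {u v : G.V} :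
    Quot.mk G.Reach u = Quot.mk G.Reach v ↔ G.Reach u v := by
  rw [Quot.eq]
  exact G.reach_equiv.eqvGen_iff

lemma reach_delete_le {F : Set G.E} {u v : G.V}
    (h : (G.deleteEdges F).Reach u v) : G.Reach u v := by
  induction h with
  | refl => exact .refl
  | tail _ hadj ih =>
      obtain ⟨f, hf⟩ := hadj
      exact ih.tail ⟨f.1, hf⟩

lemma reach_delete_cases {e : G.E} {u v : G.V} (h : G.Reach u v) :
    (G.deleteEdges {e}).Reach u v ∨ (G.deleteEdges {e}).Reach (G.s e) v ∨
      (G.deleteEdges {e}).Reach (G.t e) v := by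
  induction h with
  | refl => exact Or.inl .refl
  | tail _ hadj ih =>
      obtain ⟨f, hf⟩ := hadj
      by_cases hfe : f = e
      · subst hfe
        rcases hf with ⟨h1, h2⟩ | ⟨h1, h2⟩
        · exact Or.inr (Or.inr (by rw [h2]; exact Relation.ReflTransGen.refl))
        · exact Or.inr (Or.inl (by rw [h1]; exact Relation.ReflTransGen.refl))
      · have hadj' : (G.deleteEdges {e}).Adj _ _ :=
          ⟨⟨f, by simpa using hfe⟩, hf⟩
        rcases ih with h | h | h
        · exact Or.inl (h.tail hadj')
        · exact Or.inr (Or.inl (h.tail hadj'))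
        · exact Or.inr (Or.inr (h.tail hadj'))

lemma card_quot_delete (G : MetricGraph) (e : G.E) :
    Nat.card (Quot (G.deleteEdges {e}).Reach) ≤ Nat.card (Quot G.Reach) + 1 := by
  set G' := G.deleteEdges {e} with hG'
  have heq := G'.reach_equiv
  have hwd : ∀ a b : G.V, G'.Reach a b →
      (if G'.Reach (G.t e) a ∧ ¬ G'.Reach (G.s e) a then (none : Option (Quot G.Reach))
        else some (Quot.mk G.Reach a)) =
      (if G'.Reach (G.t e) b ∧ ¬ G'.Reach (G.s e) b then none
        else some (Quot.mk G.Reach b)) := by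
    intro a b hab
    have h1 : G'.Reach (G.t e) a ↔ G'.Reach (G.t e) b :=
      ⟨fun h => h.trans hab, fun h => h.trans (heq.symm hab)⟩
    have h2 : G'.Reach (G.s e) a ↔ G'.Reach (G.s e) b :=
      ⟨fun h => h.trans hab, fun h => h.trans (heq.symm hab)⟩
    have h3 : Quot.mk G.Reach a = Quot.mk G.Reach b :=
      Quot.sound (reach_delete_le hab)
    simp only [h1, h2, h3]
  let f : Quot G'.Reach → Option (Quot G.Reach) := Quot.lift _ hwd
  have hinj : Function.Injective f := by
    intro x y hxy
    induction x using Quot.ind with | _ a =>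
    induction y using Quot.ind with | _ b =>
    have hxy' : (if G'.Reach (G.t e) a ∧ ¬ G'.Reach (G.s e) a then (none : Option (Quot G.Reach))
        else some (Quot.mk G.Reach a)) =
      (if G'.Reach (G.t e) b ∧ ¬ G'.Reach (G.s e) b then none
        else some (Quot.mk G.Reach b)) := hxy
    by_cases ha : G'.Reach (G.t e) a ∧ ¬ G'.Reach (G.s e) a <;>
      by_cases hb : G'.Reach (G.t e) b ∧ ¬ G'.Reach (G.s e) b
    · exact Quot.sound ((heq.symm ha.1).trans hb.1)
    · rw [if_pos ha, if_neg hb] at hxy'; exact absurd hxy' (by simp)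
    · rw [if_neg ha, if_pos hb] at hxy'; exact absurd hxy' (by simp)
    · rw [if_neg ha, if_neg hb] at hxy'
      have hab : G.Reach a b := G.quot_mk_eq_iff.mp (Option.some_injective _ hxy')
      push_neg at ha hb
      suffices h : G'.Reach a b from Quot.sound h
      have A1 := reach_delete_cases (e := e) hab
      have A2 := reach_delete_cases (e := e) (G.reach_equiv.symm hab)
      have A1' : G'.Reach a b ∨ G'.Reach (G.s e) b := by
        rcases A1 with h | h | h
        · exact Or.inl h
        · exact Or.inr h
        · exact Or.inr (hb h)
      have A2' : G'.Reach b a ∨ G'.Reach (G.s e) a := by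
        rcases A2 with h | h | h
        · exact Or.inl h
        · exact Or.inr h
        · exact Or.inr (ha h)
      rcases A1' with h | h
      · exact h
      rcases A2' with h' | h'
      · exact heq.symm h'
      · exact (heq.symm h').trans h
  haveI : Fintype (Quot G.Reach) := Fintype.ofFinite _
  calc Nat.card (Quot G'.Reach) ≤ Nat.card (Option (Quot G.Reach)) :=
        Nat.card_le_card_of_injective f hinj
    _ = Nat.card (Quot G.Reach) + 1 := Finite.card_option

end MetricGraph
lemma nat_card_subtype {α : Type} [Fintype α] (p : α → Prop) :
    Nat.card {x // p x} = (Finset.univ.filter p).card := by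
  rw [← Fintype.card_subtype]
  exact Nat.card_eq_fintype_card

namespace MetricGraph

variable {G : MetricGraph}

lemma card_V_le_aux : ∀ (n : ℕ) (G : MetricGraph), Nat.card G.E = n →
    Nat.card G.V ≤ n + Nat.card (Quot G.Reach) := by
  intro n
  induction n with
  | zero =>
      intro G hG
      rw [Nat.card_eq_fintype_card] at hG
      have hemp : IsEmpty G.E := Fintype.card_eq_zero_iff.mp hG
      have hreach : ∀ u v : G.V, G.Reach u v → u = v := by
        intro u v h
        induction h with
        | refl => rfl
        | tail _ hadj ih =>
            obtain ⟨e, _⟩ := hadj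
            exact hemp.elim e
      have hbij : Function.Bijective (Quot.mk G.Reach) :=
        ⟨fun a b hab => hreach _ _ (G.quot_mk_eq_iff.mp hab), Quot.mk_surjective⟩
      rw [Nat.card_eq_of_bijective _ hbij]
      simp
  | succ n ih =>
      intro G hG
      have hpos : 0 < Nat.card G.E := by omega
      have hne : Nonempty G.E := (Nat.card_pos_iff.mp hpos).1
      obtain ⟨e⟩ := hne
      have hE' : Nat.card (G.deleteEdges {e}).E = n := by
        have h1 : Nat.card {f : G.E // ¬ f = e} = Fintype.card G.E - 1 := by
          rw [Nat.card_eq_fintype_card, Fintype.card_subtype_compl,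
            Fintype.card_subtype_eq]
        have h2 : Nat.card (G.deleteEdges {e}).E = Nat.card {f : G.E // ¬ f = e} := rfl
        rw [Nat.card_eq_fintype_card] at hG
        omega
      have h1 := ih (G.deleteEdges {e}) hE'
      have h2 := G.card_quot_delete e
      have hV : Nat.card (G.deleteEdges {e}).V = Nat.card G.V := rfl
      omega

lemma card_quot_eq_one (hG : G.Connected) : Nat.card (Quot G.Reach) = 1 := by
  obtain ⟨⟨v⟩, hreach⟩ := hG
  rw [Nat.card_eq_one_iff_unique]
  refine ⟨⟨fun x y => ?_⟩, ⟨Quot.mk _ v⟩⟩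
  induction x using Quot.ind with | _ a =>
  induction y using Quot.ind with | _ b =>
  exact (Quot.sound (hreach a v)).trans (Quot.sound (hreach v b))

lemma genus_nonneg (hG : G.Connected) : 0 ≤ G.genus := by
  have h1 := card_V_le_aux (Nat.card G.E) G rfl
  rw [G.card_quot_eq_one hG] at h1
  have h2 : Nat.card G.V = Fintype.card G.V := Nat.card_eq_fintype_card
  have h3 : Nat.card G.E = Fintype.card G.E := Nat.card_eq_fintype_card
  unfold genus
  omega

end MetricGraph
namespace MetricGraph

lemma comp_connected (G : MetricGraph) (F : Set G.E) (v : G.V)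
    (hs : ∀ e ∈ G.compE F v, G.s e ∈ G.compV F v)
    (ht : ∀ e ∈ G.compE F v, G.t e ∈ G.compV F v) :
    (G.subgraphOn (G.compV F v) (G.compE F v) hs ht).Connected := by
  set H := G.subgraphOn (G.compV F v) (G.compE F v) hs ht with hH
  have hv : v ∈ G.compV F v := Relation.ReflTransGen.refl
  have key : ∀ u (h' : (G.deleteEdges F).Reach v u), H.Reach ⟨v, hv⟩ ⟨u, h'⟩ := by
    intro u h'
    induction h' with
    | refl => exact Relation.ReflTransGen.refl
    | @tail b c hvb hadj ih =>
        obtain ⟨f, hf⟩ := hadj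
        have hb : b ∈ G.compV F v := hvb
        have hc : c ∈ G.compV F v := hvb.tail ⟨f, hf⟩
        rcases hf with ⟨h1, h2⟩ | ⟨h1, h2⟩
        · have hmem : f.1 ∈ G.compE F v :=
            ⟨f.2, by rw [show G.s f.1 = b from h1]; exact hb,
              by rw [show G.t f.1 = c from h2]; exact hc⟩
          exact ih.tail ⟨⟨f.1, hmem⟩, Or.inl ⟨Subtype.ext h1, Subtype.ext h2⟩⟩
        · have hmem : f.1 ∈ G.compE F v :=
            ⟨f.2, by rw [show G.s f.1 = c from h1]; exact hc,
              by rw [show G.t f.1 = b from h2]; exact hb⟩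
          exact ih.tail ⟨⟨f.1, hmem⟩, Or.inr ⟨Subtype.ext h1, Subtype.ext h2⟩⟩
  refine ⟨⟨⟨v, hv⟩⟩, fun x y => ?_⟩
  obtain ⟨u, hu⟩ := x
  obtain ⟨u', hu'⟩ := y
  exact (H.reach_equiv.symm (key u hu)).trans (key u' hu')

end MetricGraph

namespace DoubleCover

variable {Gt G : MetricGraph} (dc : DoubleCover Gt G)

lemma card_Et (hef : dc.IsEdgeFree) : Fintype.card Gt.E = 2 * Fintype.card G.E := by
  classical
  rw [← Finset.card_univ,
    Finset.card_eq_sum_card_fiberwise (f := dc.πE) (t := Finset.univ)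
      (fun f _ => Finset.mem_univ _)]
  have h2 : ∀ e ∈ Finset.univ, (Finset.univ.filter (fun f => dc.πE f = e)).card = 2 := by
    intro e _
    obtain ⟨f, hf⟩ := dc.πE_surj e
    have hne : dc.ιE f ≠ f := fun h => hef e ⟨f, hf, h⟩
    have hset : Finset.univ.filter (fun f' => dc.πE f' = e) = {f, dc.ιE f} := by
      ext f'
      simp only [Finset.mem_filter, Finset.mem_univ, true_and, Finset.mem_insert,
        Finset.mem_singleton]
      constructor
      · intro h
        exact dc.fiberE f f' (h.trans hf.symm)
      · rintro (rfl | rfl)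
        · exact hf
        · rw [dc.πE_ι]; exact hf
    rw [hset, Finset.card_pair (Ne.symm hne)]
  rw [Finset.sum_congr rfl h2, Finset.sum_const, Finset.card_univ, smul_eq_mul, mul_comm]

lemma card_Vt : Fintype.card Gt.V
    = Fintype.card G.V + (Finset.univ.filter (fun v => ¬ dc.dilatedV v)).card := by
  classical
  rw [← Finset.card_univ,
    Finset.card_eq_sum_card_fiberwise (f := dc.πV) (t := Finset.univ)
      (fun w _ => Finset.mem_univ _)]
  have h2 : ∀ v ∈ Finset.univ, (Finset.univ.filter (fun w => dc.πV w = v)).card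
      = 1 + if ¬ dc.dilatedV v then 1 else 0 := by
    intro v _
    by_cases hd : dc.dilatedV v
    · obtain ⟨w, hw, hfix⟩ := hd
      have hset : Finset.univ.filter (fun w' => dc.πV w' = v) = {w} := by
        ext w'
        simp only [Finset.mem_filter, Finset.mem_univ, true_and, Finset.mem_singleton]
        constructor
        · intro h
          rcases dc.fiberV w w' (h.trans hw.symm) with h' | h'
          · exact h'
          · rw [h', hfix]
        · rintro rfl; exact hw
      rw [hset, Finset.card_singleton, if_neg (not_not_intro ⟨w, hw, hfix⟩)]
    · obtain ⟨w, hw⟩ := dc.πV_surj v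
      have hne : dc.ιV w ≠ w := fun h => hd ⟨w, hw, h⟩
      have hset : Finset.univ.filter (fun w' => dc.πV w' = v) = {w, dc.ιV w} := by
        ext w'
        simp only [Finset.mem_filter, Finset.mem_univ, true_and, Finset.mem_insert,
          Finset.mem_singleton]
        constructor
        · intro h
          exact dc.fiberV w w' (h.trans hw.symm)
        · rintro (rfl | rfl)
          · exact hw
          · rw [dc.πV_ι]; exact hw
      rw [hset, Finset.card_pair (Ne.symm hne), if_pos hd]
  rw [Finset.sum_congr rfl h2, Finset.sum_add_distrib, Finset.sum_const, Finset.card_univ,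
    smul_eq_mul, mul_one]
  congr 1
  rw [Finset.card_filter]

end DoubleCover
namespace DoubleCover

variable {Gt G : MetricGraph} (dc : DoubleCover Gt G)

lemma part1 (S : Set G.V) (T : Set G.E)
    (hs : ∀ e ∈ T, G.s e ∈ S) (ht : ∀ e ∈ T, G.t e ∈ S)
    (hconn : (G.subgraphOn S T hs ht).Connected) :
    dc.gtilde S T = (G.subgraphOn S T hs ht).genus - 1
        + (Nat.card ({v : G.V | v ∈ S ∧ dc.dilatedV v}) : ℤ) ∧
    (-1 : ℤ) ≤ dc.gtilde S T := by
  classical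
  have hTE : Fintype.card (G.subgraphOn S T hs ht).E = Nat.card ↥T := by
    rw [← Nat.card_eq_fintype_card]; rfl
  have hTV : Fintype.card (G.subgraphOn S T hs ht).V = Nat.card {v : G.V | v ∈ S} := by
    rw [← Nat.card_eq_fintype_card]; rfl
  have hsplit : Nat.card {v : G.V | v ∈ S ∧ ¬ dc.dilatedV v}
      + Nat.card {v : G.V | v ∈ S ∧ dc.dilatedV v} = Nat.card {v : G.V | v ∈ S} := by
    rw [nat_card_subtype, nat_card_subtype, nat_card_subtype]
    have h := Finset.card_filter_add_card_filter_not
      (s := Finset.univ.filter (fun v : G.V => v ∈ S)) (p := fun v => ¬ dc.dilatedV v)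
    rw [Finset.filter_filter, Finset.filter_filter] at h
    simp only [not_not] at h
    convert h using 3 <;> simp [Set.mem_setOf_eq]
  have hgen : (G.subgraphOn S T hs ht).genus
      = (Nat.card ↥T : ℤ) - (Nat.card {v : G.V | v ∈ S} : ℤ) + 1 := by
    unfold MetricGraph.genus
    rw [hTE, hTV]
  have heq : dc.gtilde S T = (G.subgraphOn S T hs ht).genus - 1
      + (Nat.card ({v : G.V | v ∈ S ∧ dc.dilatedV v}) : ℤ) := by
    unfold gtilde
    rw [hgen]
    omega
  refine ⟨heq, ?_⟩
  have hnn := MetricGraph.genus_nonneg hconn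
  omega

end DoubleCover
/-- **Statement 7.**  For an edge-free harmonic double cover `π : Γ̃ → Γ`:
(i) for every connected subgraph `Γ₀ = (S, T)`,
`g̃(Γ₀) = g(Γ₀) - 1 + #{dilated vertices of Γ₀} ≥ -1`; and
(ii) for any set `F` of `h = g(Γ̃) - g(Γ)` undilated edges, the quantities
`g̃(Γᵢ)` of the connected components `Γᵢ` of `Γ ∖ F` sum to zero, hence either
some `g̃(Γᵢ) = -1` or all `g̃(Γᵢ) = 0`. -/
theorem gtilde_of_edgeFree
    (Gt G : MetricGraph) (dc : DoubleCover Gt G)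
    (hGt : Gt.Connected) (hG : G.Connected) (hef : dc.IsEdgeFree) :
    (∀ (S : Set G.V) (T : Set G.E)
        (hs : ∀ e ∈ T, G.s e ∈ S) (ht : ∀ e ∈ T, G.t e ∈ S),
      (G.subgraphOn S T hs ht).Connected →
        dc.gtilde S T = (G.subgraphOn S T hs ht).genus - 1
            + (Nat.card ({v : G.V | v ∈ S ∧ dc.dilatedV v}) : ℤ) ∧
        (-1 : ℤ) ≤ dc.gtilde S T) ∧
    (∀ F : Finset G.E,
      (F.card : ℤ) = Gt.genus - G.genus → (∀ e ∈ F, ¬ dc.dilatedE e) →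
      ∀ R : Finset G.V,
        (∀ u : G.V, ∃! v : G.V, v ∈ R ∧ (G.deleteEdges (↑F)).Reach v u) →
        (∑ v ∈ R, dc.gtilde (G.compV (↑F) v) (G.compE (↑F) v)) = 0 ∧
        ((∃ v ∈ R, dc.gtilde (G.compV (↑F) v) (G.compE (↑F) v) = -1) ∨
          ∀ v ∈ R, dc.gtilde (G.compV (↑F) v) (G.compE (↑F) v) = 0)) := by
    classical
  have hpart1 : ∀ (S : Set G.V) (T : Set G.E)
      (hs : ∀ e ∈ T, G.s e ∈ S) (ht : ∀ e ∈ T, G.t e ∈ S),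
      (G.subgraphOn S T hs ht).Connected →
        dc.gtilde S T = (G.subgraphOn S T hs ht).genus - 1
            + (Nat.card ({v : G.V | v ∈ S ∧ dc.dilatedV v}) : ℤ) ∧
        (-1 : ℤ) ≤ dc.gtilde S T :=
    fun S T hs ht hconn => dc.part1 S T hs ht hconn
  refine ⟨hpart1, ?_⟩
  intro F hFcard hFdil R hR
  -- representatives
  set rep : G.V → G.V := fun u => (hR u).choose with hrepdef
  have hrepR : ∀ u, rep u ∈ R ∧ (G.deleteEdges (↑F)).Reach (rep u) u :=
    fun u => (hR u).choose_spec.1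
  have hrepU : ∀ u w, w ∈ R → (G.deleteEdges (↑F)).Reach w u → w = rep u :=
    fun u w hw h => (hR u).choose_spec.2 w ⟨hw, h⟩
  have hmemV : ∀ v ∈ R, ∀ u, u ∈ G.compV (↑F) v ↔ rep u = v := by
    intro v hv u
    constructor
    · intro h; exact (hrepU u v hv h).symm
    · intro h; rw [← h]; exact (hrepR u).2
  have hadjF : ∀ e : G.E, e ∉ (↑F : Set G.E) →
      (G.deleteEdges (↑F)).Adj (G.s e) (G.t e) :=
    fun e he => ⟨⟨e, he⟩, Or.inl ⟨rfl, rfl⟩⟩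
  have hmemE : ∀ v ∈ R, ∀ e, e ∈ G.compE (↑F) v ↔ (e ∉ F ∧ rep (G.s e) = v) := by
    intro v hv e
    constructor
    · rintro ⟨he, hs', ht'⟩
      exact ⟨by simpa using he, (hmemV v hv _).mp hs'⟩
    · rintro ⟨he, hre⟩
      have he' : e ∉ (↑F : Set G.E) := by simpa using he
      have hs' : G.s e ∈ G.compV (↑F) v := (hmemV v hv _).mpr hre
      exact ⟨he', hs', Relation.ReflTransGen.tail hs' (hadjF e he')⟩
  -- edge sum
  have hEsum : ∑ v ∈ R, Nat.card ↥(G.compE (↑F) v)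
      = (Finset.univ.filter (fun e : G.E => e ∉ F)).card := by
    have h0 : ∀ v ∈ R, Nat.card ↥(G.compE (↑F) v)
        = (Finset.univ.filter (fun e => e ∉ F ∧ rep (G.s e) = v)).card := by
      intro v hv
      rw [nat_card_subtype]
      congr 1
      ext e
      simp only [Finset.mem_filter, Finset.mem_univ, true_and]
      exact hmemE v hv e
    rw [Finset.sum_congr rfl h0]
    have hfib := Finset.card_eq_sum_card_fiberwise
      (s := Finset.univ.filter (fun e : G.E => e ∉ F)) (t := R)
      (f := fun e => rep (G.s e)) (fun e _ => (hrepR (G.s e)).1)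
    rw [hfib]
    refine Finset.sum_congr rfl fun v _ => ?_
    rw [Finset.filter_filter]
  -- vertex sum
  have hBsum : ∑ v ∈ R, Nat.card {u : G.V | u ∈ G.compV (↑F) v ∧ ¬ dc.dilatedV u}
      = (Finset.univ.filter (fun u : G.V => ¬ dc.dilatedV u)).card := by
    have h0 : ∀ v ∈ R, Nat.card {u : G.V | u ∈ G.compV (↑F) v ∧ ¬ dc.dilatedV u}
        = (Finset.univ.filter (fun u => ¬ dc.dilatedV u ∧ rep u = v)).card := by
      intro v hv
      rw [nat_card_subtype]
      congr 1
      ext u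
      simp only [Finset.mem_filter, Finset.mem_univ, true_and, Set.mem_setOf_eq,
        hmemV v hv u]
      tauto
    rw [Finset.sum_congr rfl h0]
    have hfib := Finset.card_eq_sum_card_fiberwise
      (s := Finset.univ.filter (fun u : G.V => ¬ dc.dilatedV u)) (t := R)
      (f := rep) (fun u _ => (hrepR u).1)
    rw [hfib]
    refine Finset.sum_congr rfl fun v _ => ?_
    rw [Finset.filter_filter]
  -- global counts
  have hEt := dc.card_Et hef
  have hVt := dc.card_Vt
  have hcompl : (Finset.univ.filter (fun e : G.E => e ∉ F)).card + F.card
      = Fintype.card G.E := by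
    have : Finset.univ.filter (fun e : G.E => e ∉ F) = Fᶜ := by
      ext e; simp
    rw [this, Finset.card_compl]
    have := Finset.card_le_univ F
    omega
  have hVsplit : (Finset.univ.filter (fun u : G.V => ¬ dc.dilatedV u)).card
      + (Finset.univ.filter (fun u : G.V => dc.dilatedV u)).card
      = Fintype.card G.V := by
    rw [add_comm]
    rw [Finset.card_filter_add_card_filter_not, Finset.card_univ]
  have hFcard' : (F.card : ℤ) = ((Fintype.card Gt.E : ℤ) - Fintype.card Gt.V + 1)
      - ((Fintype.card G.E : ℤ) - Fintype.card G.V + 1) := hFcard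
  have hkey : ((Finset.univ.filter (fun e : G.E => e ∉ F)).card : ℤ)
      = ((Finset.univ.filter (fun u : G.V => ¬ dc.dilatedV u)).card : ℤ) := by
    omega
  have hsum : (∑ v ∈ R, dc.gtilde (G.compV (↑F) v) (G.compE (↑F) v)) = 0 := by
    unfold DoubleCover.gtilde
    rw [Finset.sum_sub_distrib, ← Nat.cast_sum, ← Nat.cast_sum, hEsum, hBsum, hkey]
    ring
  refine ⟨hsum, ?_⟩
  have hge : ∀ v ∈ R, (-1 : ℤ) ≤ dc.gtilde (G.compV (↑F) v) (G.compE (↑F) v) := by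
    intro v hv
    exact (hpart1 (G.compV (↑F) v) (G.compE (↑F) v)
      (fun e he => he.2.1) (fun e he => he.2.2)
      (G.comp_connected (↑F) v _ _)).2
  by_cases hex : ∃ v ∈ R, dc.gtilde (G.compV (↑F) v) (G.compE (↑F) v) = -1
  · exact Or.inl hex
  · push_neg at hex
    refine Or.inr ?_
    have hnn : ∀ v ∈ R, 0 ≤ dc.gtilde (G.compV (↑F) v) (G.compE (↑F) v) := by
      intro v hv
      have h1 := hge v hv
      have h2 := hex v hv
      omega
    exact fun v hv => (Finset.sum_eq_zero_iff_of_nonneg hnn).mp hsum v hv
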